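/- Let n ≥ 1, let m ∈ ℤ with m ≤ −n−1, let N ∈ ℕ, and let C ≥ 0. Suppose a : ℝⁿ → ℂ is smooth and satisfies ‖D^k a(ξ)‖ ≤ C (1 + ‖ξ‖)^{m−k} for all ξ ∈ ℝⁿ and all integers 0 ≤ k ≤ N. Then the Fourier-type integral a^∨(x) := ∫_{ℝⁿ} a(ξ) e^{−i⟨x,ξ⟩} dξ converges absolutely for every x ∈ ℝⁿ, and there is a constant C′ ≥ 0, depending only on n, m, N and C, such that |a^∨(x)| ≤ C′ ‖x‖^{−N} for every x ≠ 0. -/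

import Mathlib

open MeasureTheory Real FourierTransform

/-- Fourier transforms of symbols of sufficiently negative order `m ≤ -n-1` converge
absolutely and decay rapidly away from the origin. -/
theorem statement1 (n : ℕ) (hn : 1 ≤ n) (m : ℤ) (hm : m ≤ -(n : ℤ) - 1)
    (N : ℕ) (C : ℝ) (hC : 0 ≤ C) :
    ∃ C' : ℝ, 0 ≤ C' ∧
      ∀ a : EuclideanSpace ℝ (Fin n) → ℂ, ContDiff ℝ (⊤ : ℕ∞) a →
        (∀ (ξ : EuclideanSpace ℝ (Fin n)) (k : ℕ), k ≤ N →
          ‖iteratedFDeriv ℝ k a ξ‖ ≤ C * (1 + ‖ξ‖) ^ (m - (k : ℤ))) →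
        (∀ x : EuclideanSpace ℝ (Fin n),
          Integrable fun ξ : EuclideanSpace ℝ (Fin n) =>
            a ξ * Complex.exp (-(Complex.I * ((inner ℝ x ξ : ℝ) : ℂ)))) ∧
        ∀ x : EuclideanSpace ℝ (Fin n), x ≠ 0 →
          ‖∫ ξ : EuclideanSpace ℝ (Fin n),
              a ξ * Complex.exp (-(Complex.I * ((inner ℝ x ξ : ℝ) : ℂ)))‖ ≤
            C' * ‖x‖ ^ (-(N : ℤ)) := by
  set E := EuclideanSpace ℝ (Fin n)
  -- integrability of the weight
  have hI : Integrable (fun ξ : E => (1 + ‖ξ‖) ^ ((m : ℝ))) := by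
    have hm' : (m : ℝ) ≤ -(n : ℝ) - 1 := by exact_mod_cast hm
    have h1 : ((Module.finrank ℝ E : ℝ)) < -(m : ℝ) := by
      have hfr : Module.finrank ℝ E = n := by
        simp [E, finrank_euclideanSpace]
      rw [hfr]
      linarith
    have := integrable_one_add_norm (E := E) (μ := volume) h1
    simpa using this
  set I₀ : ℝ := ∫ ξ : E, (1 + ‖ξ‖) ^ ((m : ℝ)) with hI₀
  have hI₀nonneg : 0 ≤ I₀ := integral_nonneg fun ξ => rpow_nonneg (by positivity) _
  refine ⟨(2 * π) ^ N * (2 ^ N * ((N + 1) * (C * I₀))), by positivity, ?_⟩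
  intro a ha hbound
  -- the bounds in rpow form
  have key : ∀ (ξ : E) (k : ℕ), k ≤ N →
      ‖iteratedFDeriv ℝ k a ξ‖ ≤ C * (1 + ‖ξ‖) ^ ((m : ℝ)) := by
    intro ξ k hk
    refine (hbound ξ k hk).trans ?_
    have h1 : (1:ℝ) ≤ 1 + ‖ξ‖ := by linarith [norm_nonneg ξ]
    have h2 : (1 + ‖ξ‖) ^ (m - (k : ℤ)) ≤ (1 + ‖ξ‖) ^ ((m : ℝ)) := by
      rw [← Real.rpow_intCast (1 + ‖ξ‖) (m - (k : ℤ))]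
      apply Real.rpow_le_rpow_of_exponent_le h1
      push_cast
      linarith
    exact mul_le_mul_of_nonneg_left h2 hC
  have hacont : Continuous a := ha.continuous
  have hint : ∀ k : ℕ, k ≤ N → Integrable (fun ξ : E => ‖iteratedFDeriv ℝ k a ξ‖) := by
    intro k hk
    refine (hI.const_mul C).mono' ?_ ?_
    · exact (ha.continuous_iteratedFDeriv
        (by exact_mod_cast le_top)).norm.aestronglyMeasurable
    · filter_upwards with ξ
      simpa using key ξ k hk
  have habs : ∀ x : E, Integrable fun ξ : E =>
      a ξ * Complex.exp (-(Complex.I * ((inner ℝ x ξ : ℝ) : ℂ))) := by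
    intro x
    refine (hI.const_mul C).mono' ?_ ?_
    · apply Continuous.aestronglyMeasurable
      have hin : Continuous fun ξ : E => (inner ℝ x ξ : ℝ) := continuous_const.inner continuous_id
      exact hacont.mul (Complex.continuous_exp.comp
        ((continuous_const.mul (Complex.continuous_ofReal.comp hin)).neg))
    · filter_upwards with ξ
      have h1 : ‖Complex.exp (-(Complex.I * ((inner ℝ x ξ : ℝ) : ℂ)))‖ = 1 := by
        simp [Complex.norm_exp]
      rw [norm_mul, h1, mul_one]
      have := key ξ 0 (Nat.zero_le N)
      simpa using this
  refine ⟨habs, ?_⟩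
  intro x hx
  -- rewrite the integral as a Fourier integral
  have heq : (∫ ξ : E, a ξ * Complex.exp (-(Complex.I * ((inner ℝ x ξ : ℝ) : ℂ))))
      = 𝓕 a ((2 * π)⁻¹ • x) := by
    rw [Real.fourier_eq']
    congr 1
    ext v
    have h2 : (inner ℝ v ((2 * π)⁻¹ • x) : ℝ) = (2 * π)⁻¹ * (inner ℝ v x : ℝ) :=
      real_inner_smul_right _ _ _
    rw [h2, smul_eq_mul, real_inner_comm v x, mul_comm]
    congr 1
    push_cast
    congr 1
    have hπ : (2 * (π:ℂ)) * (2 * (π:ℂ))⁻¹ = 1 := by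
      apply mul_inv_cancel₀
      simp [Complex.ofReal_ne_zero, Real.pi_ne_zero, Complex.ext_iff]
    set t : ℂ := ((inner ℝ v x : ℝ) : ℂ) with ht
    calc -(Complex.I * t)
        = -(((2 * (π:ℂ)) * (2 * (π:ℂ))⁻¹) * (t * Complex.I)) := by rw [hπ]; ring
      _ = (-2 * (π:ℂ)) * ((2 * (π:ℂ))⁻¹ * t) * Complex.I := by ring
  rw [heq]
  -- apply the derivative bound
  set w : E := (2 * π)⁻¹ • x with hw
  have h'f : ∀ (k j : ℕ), (k : ℕ∞) ≤ (0 : ℕ∞) → (j : ℕ∞) ≤ (N : ℕ∞) →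
      Integrable (fun v : E => ‖v‖ ^ k * ‖iteratedFDeriv ℝ j a v‖) := by
    intro k j hk hj
    have hk0 : k = 0 := Nat.le_zero.mp (by exact_mod_cast hk)
    have hjN : j ≤ N := by exact_mod_cast hj
    subst hk0
    simpa using hint j hjN
  have main := Real.pow_mul_norm_iteratedFDeriv_fourier_le (K := 0) (N := (N : ℕ∞))
    (ha.of_le (by exact_mod_cast le_top)) h'f (le_refl (0 : ℕ∞)) (le_refl ((N : ℕ∞))) w
  simp only [norm_iteratedFDeriv_zero, pow_zero, one_mul, Nat.cast_zero, mul_zero,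
    zero_add] at main
  -- bound the sum
  have hsum : (∑ p ∈ Finset.range 1 ×ˢ Finset.range (N + 1),
      ∫ v : E, ‖v‖ ^ p.1 * ‖iteratedFDeriv ℝ p.2 a v‖) ≤ (N + 1) * (C * I₀) := by
    have hcard : ((Finset.range 1 ×ˢ Finset.range (N + 1)).card) = N + 1 := by
      simp
    calc (∑ p ∈ Finset.range 1 ×ˢ Finset.range (N + 1),
        ∫ v : E, ‖v‖ ^ p.1 * ‖iteratedFDeriv ℝ p.2 a v‖)
        ≤ ∑ _p ∈ Finset.range 1 ×ˢ Finset.range (N + 1), C * I₀ := by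
          apply Finset.sum_le_sum
          intro p hp
          simp only [Finset.mem_product, Finset.mem_range, Nat.lt_succ_iff] at hp
          have hp1 : p.1 = 0 := Nat.le_zero.mp hp.1
          rw [hp1]
          simp only [pow_zero, one_mul]
          rw [hI₀, ← integral_const_mul]
          apply integral_mono (hint p.2 hp.2) (hI.const_mul C)
          intro v
          exact key v p.2 hp.2
      _ = (N + 1) * (C * I₀) := by
          rw [Finset.sum_const, hcard, nsmul_eq_mul]
          push_cast
          ring
  have hS0 : 0 ≤ (∑ p ∈ Finset.range 1 ×ˢ Finset.range (N + 1),
      ∫ v : E, ‖v‖ ^ p.1 * ‖iteratedFDeriv ℝ p.2 a v‖) := by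
    apply Finset.sum_nonneg
    intro p _
    apply integral_nonneg
    intro v
    positivity
  have main2 : ‖w‖ ^ N * ‖𝓕 a w‖ ≤ 2 ^ N * ((N + 1) * (C * I₀)) := by
    refine main.trans ?_
    exact mul_le_mul_of_nonneg_left hsum (by positivity)
  -- finish
  have hwnorm : ‖w‖ = (2 * π)⁻¹ * ‖x‖ := by
    rw [hw, norm_smul, Real.norm_eq_abs, abs_of_pos (by positivity)]
  have hxpos : 0 < ‖x‖ := norm_pos_iff.mpr hx
  have hxN : (0:ℝ) < ‖x‖ ^ N := by positivity
  have hxw : ‖x‖ ^ N = (2 * π) ^ N * ‖w‖ ^ N := by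
    rw [hwnorm, ← mul_pow, ← mul_assoc, mul_inv_cancel₀ (by positivity : (2*π) ≠ 0), one_mul]
  have hfin : ‖𝓕 a w‖ * ‖x‖ ^ N ≤ (2 * π) ^ N * (2 ^ N * ((N + 1) * (C * I₀))) := by
    rw [hxw]
    calc ‖𝓕 a w‖ * ((2 * π) ^ N * ‖w‖ ^ N) = (2 * π) ^ N * (‖w‖ ^ N * ‖𝓕 a w‖) := by ring
      _ ≤ (2 * π) ^ N * (2 ^ N * ((N + 1) * (C * I₀))) :=
          mul_le_mul_of_nonneg_left main2 (by positivity)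
  rw [zpow_neg, zpow_natCast]
  calc ‖𝓕 a w‖ = ‖𝓕 a w‖ * ‖x‖ ^ N * (‖x‖ ^ N)⁻¹ := by field_simp
    _ ≤ (2 * π) ^ N * (2 ^ N * ((N + 1) * (C * I₀))) * (‖x‖ ^ N)⁻¹ := by gcongr
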